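/- Let C_1 ⊇ C_2 ⊇ ⋯ ⊇ C_s be a nested sequence of linear [m, k_i, d_i] codes over F_q and let A be an s × l full-rank matrix over F_q. Then the matrix-product code [C_1,…,C_s]·A, consisting of all vectors (Σ_i a_{i1} c_i, …, Σ_i a_{il} c_i) with c_i ∈ C_i, has length ml, dimension Σ_{i=1}^s k_i, and minimum distance at least min_{1≤i≤s} d_i δ_i, where δ_i is the minimum distance of the code in F_q^l generated by the first i rows of A. -/

import Mathlib

/-- Hamming weight of a vector. -/
def hamWt {ι F : Type*} [Fintype ι] [Zero F] [DecidableEq F] (x : ι → F) : ℕ :=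
  (Finset.univ.filter fun j => x j ≠ 0).card

/-- `C` has minimum distance (weight) exactly `d`. -/
def minDistIs {ι F : Type*} [Fintype ι] [Zero F] [DecidableEq F]
    (C : Set (ι → F)) (d : ℕ) : Prop :=
  (∀ x ∈ C, x ≠ 0 → d ≤ hamWt x) ∧ ∃ x ∈ C, x ≠ 0 ∧ hamWt x = d

theorem stmt4 {F : Type*} [Field F] [Fintype F] [DecidableEq F] {s l m : ℕ}
    (C : Fin s → Submodule F (Fin m → F)) (k d δ : Fin s → ℕ)
    (hnested : ∀ i j : Fin s, i ≤ j → C j ≤ C i)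
    (hk : ∀ i, Module.finrank F (C i) = k i)
    (hd : ∀ i, minDistIs (C i : Set (Fin m → F)) (d i))
    (A : Matrix (Fin s) (Fin l) F) (hrank : A.rank = s)
    (hδ : ∀ i : Fin s, minDistIs
      ((Submodule.span F {r : Fin l → F | ∃ i' : Fin s, i' ≤ i ∧ r = A i'}) :
        Set (Fin l → F)) (δ i)) :
    ∃ D : Submodule F (Fin l × Fin m → F),
      (D : Set (Fin l × Fin m → F)) =
        {x | ∃ c : Fin s → Fin m → F, (∀ i, c i ∈ C i) ∧
          ∀ jt : Fin l × Fin m, x jt = ∑ i, A i jt.1 * c i jt.2} ∧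
      Module.finrank F D = ∑ i, k i ∧
      ∀ x ∈ D, x ≠ 0 → ∃ i, d i * δ i ≤ hamWt x := by
  classical
  -- rows of A are linearly independent
  have hli : LinearIndependent F A := by
    change LinearIndependent F A.row
    rw [linearIndependent_iff_card_eq_finrank_span, Set.finrank,
      ← Matrix.rank_eq_finrank_span_row]
    simp [hrank]
  have hli' := Fintype.linearIndependent_iff.mp hli
  -- the linear map
  let Φ : (∀ i : Fin s, C i) →ₗ[F] (Fin l × Fin m → F) :=
    { toFun := fun c jt => ∑ i, A i jt.1 * (c i : Fin m → F) jt.2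
      map_add' := by
        intro a b
        funext jt
        simp [mul_add, Finset.sum_add_distrib]
      map_smul' := by
        intro r a
        funext jt
        simp [Finset.mul_sum, mul_left_comm] }
  have hΦ : ∀ c jt, Φ c jt = ∑ i, A i jt.1 * (c i : Fin m → F) jt.2 := fun _ _ => rfl
  have hinj : Function.Injective Φ := by
    rw [← LinearMap.ker_eq_bot, LinearMap.ker_eq_bot']
    intro c hc
    funext i
    ext t
    have h0 : ∑ i, ((c i : Fin m → F) t) • A i = 0 := by
      funext j
      have := congrFun hc (j, t)
      simpa [hΦ, mul_comm, Finset.sum_apply] using this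
    exact hli' _ h0 i
  refine ⟨LinearMap.range Φ, ?_, ?_, ?_⟩
  · ext x
    simp only [SetLike.mem_coe, LinearMap.mem_range, Set.mem_setOf_eq]
    constructor
    · rintro ⟨c, rfl⟩
      exact ⟨fun i => c i, fun i => (c i).2, fun jt => rfl⟩
    · rintro ⟨c, hc, hx⟩
      exact ⟨fun i => ⟨c i, hc i⟩, funext fun jt => (hx jt).symm⟩
  · rw [LinearMap.finrank_range_of_inj hinj, Module.finrank_pi_fintype]
    exact Finset.sum_congr rfl fun i _ => hk i
  · rintro x hx hx0
    obtain ⟨c, rfl⟩ := hx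
    set c' : Fin s → Fin m → F := fun i => (c i : Fin m → F) with hc'
    -- the set of nonzero component words
    have hN : (Finset.univ.filter fun i => c' i ≠ 0).Nonempty := by
      by_contra h
      apply hx0
      have hz : ∀ i, c' i = 0 := by
        intro i
        by_contra hi
        exact h ⟨i, Finset.mem_filter.mpr ⟨Finset.mem_univ i, hi⟩⟩
      funext jt
      rw [hΦ]
      refine Finset.sum_eq_zero fun i _ => ?_
      rw [show ((c i : Fin m → F)) = 0 from hz i]
      simp
    set i₀ := (Finset.univ.filter fun i => c' i ≠ 0).max' hN with hi₀
    have hi₀mem : c' i₀ ≠ 0 := by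
      have := (Finset.univ.filter fun i => c' i ≠ 0).max'_mem hN
      exact (Finset.mem_filter.mp this).2
    have hgt : ∀ i : Fin s, ¬ i ≤ i₀ → c' i = 0 := by
      intro i hi
      by_contra h
      exact hi (Finset.le_max' _ i (Finset.mem_filter.mpr ⟨Finset.mem_univ i, h⟩))
    refine ⟨i₀, ?_⟩
    set S := (Finset.univ.filter fun t => c' i₀ t ≠ 0) with hS
    have hScard : d i₀ ≤ S.card := (hd i₀).1 (c' i₀) (c i₀).2 hi₀mem
    -- for each t in S the column vector is a nonzero element of the span code
    have hcol : ∀ t ∈ S, δ i₀ ≤ (Finset.univ.filter fun j => Φ c (j, t) ≠ 0).card := by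
      intro t ht
      have htne : c' i₀ t ≠ 0 := (Finset.mem_filter.mp ht).2
      set v : Fin l → F := fun j => Φ c (j, t) with hv
      have hvsum : v = ∑ i, (c' i t) • A i := by
        funext j
        simp [hv, hΦ, Finset.sum_apply, mul_comm, ← hc']
        rfl
      have hvmem : v ∈ Submodule.span F {r : Fin l → F | ∃ i' : Fin s, i' ≤ i₀ ∧ r = A i'} := by
        rw [hvsum, ← Finset.sum_subset (Finset.subset_univ
            (Finset.univ.filter fun i => i ≤ i₀))]
        · refine Submodule.sum_mem _ fun i hi => Submodule.smul_mem _ _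
            (Submodule.subset_span ⟨i, (Finset.mem_filter.mp hi).2, rfl⟩)
        · intro i _ hi
          rw [hgt i (by simpa using hi)]
          simp
      have hvne : v ≠ 0 := by
        intro h0
        rw [hvsum] at h0
        exact htne (hli' _ h0 i₀)
      exact (hδ i₀).1 v hvmem hvne
    -- counting
    set T : Finset (Fin l × Fin m) :=
      S.biUnion (fun t => (Finset.univ.filter fun j => Φ c (j, t) ≠ 0).map
        ⟨fun j => (j, t), fun a b h => congrArg Prod.fst h⟩) with hT
    have hdisj : ∀ t1 ∈ S, ∀ t2 ∈ S, t1 ≠ t2 → Disjoint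
        ((Finset.univ.filter fun j => Φ c (j, t1) ≠ 0).map
          ⟨fun j => (j, t1), fun a b h => congrArg Prod.fst h⟩)
        ((Finset.univ.filter fun j => Φ c (j, t2) ≠ 0).map
          ⟨fun j => (j, t2), fun a b h => congrArg Prod.fst h⟩) := by
      intro t1 _ t2 _ hne
      rw [Finset.disjoint_left]
      rintro p hp1 hp2
      obtain ⟨a, _, rfl⟩ := Finset.mem_map.mp hp1
      obtain ⟨b, _, hb⟩ := Finset.mem_map.mp hp2
      exact hne ((congrArg Prod.snd hb).symm)
    have hsub : T ⊆ Finset.univ.filter fun p => Φ c p ≠ 0 := by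
      intro p hp
      obtain ⟨t, _, hpt⟩ := Finset.mem_biUnion.mp hp
      obtain ⟨a, ha, rfl⟩ := Finset.mem_map.mp hpt
      exact Finset.mem_filter.mpr ⟨Finset.mem_univ _, (Finset.mem_filter.mp ha).2⟩
    calc d i₀ * δ i₀ ≤ S.card * δ i₀ := Nat.mul_le_mul_right _ hScard
      _ = ∑ _t ∈ S, δ i₀ := by rw [Finset.sum_const, smul_eq_mul]
      _ ≤ ∑ t ∈ S, (Finset.univ.filter fun j => Φ c (j, t) ≠ 0).card :=
          Finset.sum_le_sum hcol
      _ = ∑ t ∈ S, ((Finset.univ.filter fun j => Φ c (j, t) ≠ 0).map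
          ⟨fun j => (j, t), fun a b h => congrArg Prod.fst h⟩).card := by
          simp [Finset.card_map]
      _ = T.card := (Finset.card_biUnion hdisj).symm
      _ ≤ hamWt (Φ c) := Finset.card_le_card hsub
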